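/- Let s ≥ 3, N ≥ 1 and 0 ≤ x ≤ s^N. The number of level-N configurations X with card X = x such that the N-fold application of the induction map π to X yields the level-0 configuration whose single entry is +1 (i.e., opinion +1 wins the election) equals Σ_{x_1=0}^{s} Σ_{x_2=0}^{s^2} ⋯ Σ_{x_{N−1}=0}^{s^{N−1}} ∏_{n=0}^{N−1} c_n(s, x_n, x_{n+1}), where x_0 = 1 and x_N = x. Consequently, if the bottom-level configuration is chosen uniformly at random among level-N configurations with exactly x entries equal to +1, the probability p_x(N,s) that opinion +1 wins equals C(s^N, x)^{−1} times this sum. -/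

import Mathlib

/-- `s' = ⌈(s+1)/2⌉`, the strict-majority threshold for group size `s`. -/
def sPrime (s : ℕ) : ℕ := (s + 2) / 2

/-- Number of entries equal to `+1` (encoded as `true`) in a configuration. -/
def cfgCard {m : ℕ} (X : Fin m → Bool) : ℕ :=
  (Finset.univ.filter fun i => X i = true).card

/-- The one-step induction map `π` sending a level-`(n+1)` configuration to a
level-`n` configuration by the majority rule with ties resolved in favor of `-1`. -/
def piMap (s n : ℕ) (Z : Fin (s ^ (n + 1)) → Bool) : Fin (s ^ n) → Bool :=
  fun i => decide (sPrime s ≤ (Finset.univ.filter fun j : Fin s =>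
    Z ⟨s * (i : ℕ) + (j : ℕ), by
      have h1 : (i : ℕ) + 1 ≤ s ^ n := i.isLt
      have h2 : (j : ℕ) < s := j.isLt
      have h3 : s * ((i : ℕ) + 1) ≤ s * s ^ n := Nat.mul_le_mul_left _ h1
      have h4 : s * ((i : ℕ) + 1) = s * (i : ℕ) + s := by ring
      have h5 : s ^ (n + 1) = s * s ^ n := by rw [pow_succ, Nat.mul_comm]
      omega⟩ = true).card)

/-- `N`-fold application of the induction map, from level `N` down to level `0`. -/
def piIter (s : ℕ) : (N : ℕ) → (Fin (s ^ N) → Bool) → (Fin (s ^ 0) → Bool)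
  | 0 => fun X => X
  | N + 1 => fun X => piIter s N (piMap s N X)

/-- `c_n(s, X, z)`: the number of level-`(n+1)` configurations `Z` with
`card Z = z` and `πZ = X`. -/
def cCount (s n : ℕ) (X : Fin (s ^ n) → Bool) (z : ℕ) : ℕ :=
  (Finset.univ.filter fun Z : Fin (s ^ (n + 1)) → Bool =>
    cfgCard Z = z ∧ piMap s n Z = X).card

/-- The standard configuration with the first `x` entries equal to `+1`. -/
def stdCfg (m x : ℕ) : Fin m → Bool := fun i => decide ((i : ℕ) < x)

/-- `c_n(s, x, z) := c_n(s, X_x, z)` where `X_x` is the standard level-`n`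
configuration with `x` entries equal to `+1`. -/
def cFix (s n x z : ℕ) : ℕ := cCount s n (stdCfg (s ^ n) x) z

def blockEquiv (s n : ℕ) : Fin (s ^ n) × Fin s ≃ Fin (s ^ (n + 1)) :=
  finProdFinEquiv.trans (finCongr (pow_succ s n).symm)
lemma blockEquiv_val (s n : ℕ) (i : Fin (s ^ n)) (j : Fin s) :
    ((blockEquiv s n (i, j)) : ℕ) = s * (i : ℕ) + (j : ℕ) := by
  simp only [blockEquiv, finProdFinEquiv, Equiv.trans_apply, Equiv.coe_fn_mk, finCongr_apply,
    Fin.coe_cast]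
  omega
lemma piMap_eq (s n : ℕ) (Z : Fin (s ^ (n + 1)) → Bool) (i : Fin (s ^ n)) :
    piMap s n Z i = decide (sPrime s ≤ (Finset.univ.filter fun j : Fin s =>
      Z (blockEquiv s n (i, j)) = true).card) := by
  unfold piMap
  apply congrArg (fun c => decide (sPrime s ≤ c))
  apply congrArg
  apply Finset.filter_congr
  intro j _
  have : (⟨s * (i : ℕ) + (j : ℕ), by
      have h1 : (i : ℕ) + 1 ≤ s ^ n := i.isLt
      have h2 : (j : ℕ) < s := j.isLt
      have h3 : s * ((i : ℕ) + 1) ≤ s * s ^ n := Nat.mul_le_mul_left _ h1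
      have h4 : s * ((i : ℕ) + 1) = s * (i : ℕ) + s := by ring
      have h5 : s ^ (n + 1) = s * s ^ n := by rw [pow_succ, Nat.mul_comm]
      omega⟩ : Fin (s ^ (n+1))) = blockEquiv s n (i, j) := by
    apply Fin.ext; rw [blockEquiv_val]
  rw [this]

-- cfgCard invariance under an equiv
lemma cfgCard_comp_equiv {m : ℕ} (e : Equiv.Perm (Fin m)) (Z : Fin m → Bool) :
    cfgCard (Z ∘ e) = cfgCard Z := by
  unfold cfgCard
  apply Finset.card_nbij (fun i => e i)
  · intro a ha; simpa using (by simpa using ha)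
  · intro a _ b _ h; exact e.injective h
  · intro b hb
    refine ⟨e.symm b, ?_, by simp⟩
    simp only [Finset.coe_filter, Set.mem_setOf_eq, Finset.mem_univ, true_and] at hb ⊢
    simpa using hb
def blockPerm (s n : ℕ) (σ : Equiv.Perm (Fin (s ^ n))) : Equiv.Perm (Fin (s ^ (n + 1))) :=
  ((blockEquiv s n).symm.trans ((σ.prodCongr (Equiv.refl (Fin s))).trans (blockEquiv s n)))
lemma blockPerm_apply (s n : ℕ) (σ : Equiv.Perm (Fin (s ^ n))) (i : Fin (s ^ n)) (j : Fin s) :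
    blockPerm s n σ (blockEquiv s n (i, j)) = blockEquiv s n (σ i, j) := by
  simp [blockPerm]
lemma piMap_comp_blockPerm (s n : ℕ) (σ : Equiv.Perm (Fin (s ^ n)))
    (Z : Fin (s ^ (n + 1)) → Bool) (i : Fin (s ^ n)) :
    piMap s n (Z ∘ blockPerm s n σ) i = piMap s n Z (σ i) := by
  rw [piMap_eq, piMap_eq]
  apply congrArg (fun c => decide (sPrime s ≤ c))
  apply congrArg
  apply Finset.filter_congr
  intro j _
  simp [blockPerm_apply]
lemma subtypeCongr_apply_pos {α : Type*} {p q : α → Prop} [DecidablePred p] [DecidablePred q]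
    (e : {x // p x} ≃ {x // q x}) (f : {x // ¬p x} ≃ {x // ¬q x}) (a : α) (h : p a) :
    Equiv.subtypeCongr e f a = (e ⟨a, h⟩ : α) := by
  simp [Equiv.subtypeCongr, Equiv.sumCompl_symm_apply_of_pos (p := p) h]
lemma subtypeCongr_apply_neg {α : Type*} {p q : α → Prop} [DecidablePred p] [DecidablePred q]
    (e : {x // p x} ≃ {x // q x}) (f : {x // ¬p x} ≃ {x // ¬q x}) (a : α) (h : ¬ p a) :
    Equiv.subtypeCongr e f a = (f ⟨a, h⟩ : α) := by
  simp [Equiv.subtypeCongr, Equiv.sumCompl_symm_apply_of_neg (p := p) h]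

/-- Two boolean configurations of equal weight differ by a permutation. -/
lemma exists_perm_comp {m : ℕ} (X X' : Fin m → Bool) (h : cfgCard X = cfgCard X') :
    ∃ σ : Equiv.Perm (Fin m), ∀ i, X' i = X (σ i) := by
  have hT : Fintype.card {i : Fin m // X' i = true} = Fintype.card {i : Fin m // X i = true} := by
    rw [Fintype.card_subtype, Fintype.card_subtype]
    exact h.symm
  have hF : Fintype.card {i : Fin m // ¬ X' i = true} = Fintype.card {i : Fin m // ¬ X i = true} := by
    rw [Fintype.card_subtype_compl, Fintype.card_subtype_compl, hT]
  refine ⟨Equiv.subtypeCongr (Fintype.equivOfCardEq hT) (Fintype.equivOfCardEq hF), fun i => ?_⟩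
  by_cases hi : X' i = true
  · rw [subtypeCongr_apply_pos (p := fun i => X' i = true) (Fintype.equivOfCardEq hT) (Fintype.equivOfCardEq hF) i hi]
    have := (Fintype.equivOfCardEq hT ⟨i, hi⟩).2
    rw [hi, this]
  · rw [subtypeCongr_apply_neg (p := fun i => X' i = true) (Fintype.equivOfCardEq hT) (Fintype.equivOfCardEq hF) i hi]
    have := (Fintype.equivOfCardEq hF ⟨i, hi⟩).2
    simp only [Bool.not_eq_true] at hi this
    rw [hi, this]

/-- `cCount` depends on `X` only through `cfgCard X`. -/
lemma cCount_congr (s n : ℕ) (X X' : Fin (s ^ n) → Bool) (h : cfgCard X = cfgCard X')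
    (z : ℕ) : cCount s n X z = cCount s n X' z := by
  obtain ⟨σ, hσ⟩ := exists_perm_comp X X' h
  unfold cCount
  apply Finset.card_nbij (fun Z => Z ∘ blockPerm s n σ)
  · intro Z hZ
    simp only [Finset.mem_coe, Finset.mem_filter, Finset.mem_univ, true_and] at hZ ⊢
    obtain ⟨h1, h2⟩ := hZ
    refine ⟨by rw [cfgCard_comp_equiv _ Z]; exact h1, ?_⟩
    funext i
    rw [piMap_comp_blockPerm, h2, hσ]
  · intro a _ b _ hab
    funext k
    have := congrFun hab ((blockPerm s n σ).symm k)
    simpa using this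
  · intro W hW
    simp only [Finset.mem_coe, Finset.mem_filter, Finset.mem_univ, true_and] at hW ⊢
    obtain ⟨h1, h2⟩ := hW
    refine ⟨W ∘ (blockPerm s n σ).symm, ?_, ?_⟩
    swap
    · funext k; simp
    simp only [Finset.mem_coe, Finset.mem_filter, Finset.mem_univ, true_and]
    refine ⟨?_, ?_⟩
    · rw [cfgCard_comp_equiv ((blockPerm s n σ).symm) W]; exact h1
    · funext i
      have h3 := piMap_comp_blockPerm s n σ (W ∘ (blockPerm s n σ).symm) (σ.symm i)
      rw [Equiv.apply_symm_apply] at h3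
      have h4 : (W ∘ ⇑(blockPerm s n σ).symm) ∘ ⇑(blockPerm s n σ) = W := by
        funext k; simp
      rw [h4] at h3
      rw [← h3, h2, hσ (σ.symm i), Equiv.apply_symm_apply]
lemma cfgCard_stdCfg (m x : ℕ) (hx : x ≤ m) : cfgCard (stdCfg m x) = x := by
  unfold cfgCard stdCfg
  have h : (Finset.univ.filter fun i : Fin m => decide ((i : ℕ) < x) = true).card
      = (Finset.range x).card := by
    apply Finset.card_nbij (fun i : Fin m => (i : ℕ))
    · intro a ha
      simp only [Finset.mem_coe, Finset.mem_filter, Finset.mem_univ, true_and,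
        decide_eq_true_eq] at ha
      simpa using ha
    · intro a _ b _ hab; exact Fin.ext hab
    · intro b hb
      simp only [Finset.mem_coe, Finset.mem_range] at hb
      exact ⟨⟨b, lt_of_lt_of_le hb hx⟩, by simp [hb], rfl⟩
  rw [h, Finset.card_range]
lemma cfgCard_le {m : ℕ} (X : Fin m → Bool) : cfgCard X ≤ m := by
  unfold cfgCard
  calc (Finset.univ.filter fun i => X i = true).card ≤ Finset.univ.card :=
        Finset.card_filter_le _ _
    _ = m := by simp

/-- level count -/
def T (s N x : ℕ) : ℕ :=
  (Finset.univ.filter fun X : Fin (s ^ N) → Bool =>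
      cfgCard X = x ∧ piIter s N X = fun _ => true).card
lemma T_rec (s N x : ℕ) :
    T s (N + 1) x = ∑ y ∈ Finset.range (s ^ N + 1), T s N y * cFix s N y x := by
  have key : T s (N + 1) x = ∑ Y ∈ (Finset.univ.filter fun Y : Fin (s ^ N) → Bool =>
      piIter s N Y = fun _ => true), cCount s N Y x := by
    unfold T
    rw [Finset.card_eq_sum_card_fiberwise (f := fun X => piMap s N X)
      (t := Finset.univ.filter fun Y : Fin (s ^ N) → Bool => piIter s N Y = fun _ => true)]
    · apply Finset.sum_congr rfl
      intro Y hY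
      simp only [Finset.mem_filter, Finset.mem_univ, true_and] at hY
      unfold cCount
      congr 1
      rw [Finset.filter_filter]
      apply Finset.filter_congr
      intro Z _
      constructor
      · rintro ⟨⟨hc, _⟩, hp⟩; exact ⟨hc, hp⟩
      · rintro ⟨hc, hp⟩
        refine ⟨⟨hc, ?_⟩, hp⟩
        show piIter s N (piMap s N Z) = fun _ => true
        rw [hp, hY]
    · intro X hX
      simp only [Finset.mem_coe, Finset.mem_filter, Finset.mem_univ, true_and] at hX ⊢
      exact hX.2
  rw [key]
  rw [← Finset.sum_fiberwise_of_maps_to (g := fun Y : Fin (s ^ N) → Bool => cfgCard Y)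
      (t := Finset.range (s ^ N + 1))
      (fun Y _ => Finset.mem_range.mpr (Nat.lt_succ_of_le (cfgCard_le Y)))
      (fun Y => cCount s N Y x)]
  apply Finset.sum_congr rfl
  intro y hy
  have hy' : y ≤ s ^ N := Nat.lt_succ_iff.mp (Finset.mem_range.mp hy)
  have : ∀ Y ∈ (Finset.univ.filter fun Y : Fin (s ^ N) → Bool =>
      piIter s N Y = fun _ => true).filter (fun Y => cfgCard Y = y),
      cCount s N Y x = cFix s N y x := by
    intro Y hY
    simp only [Finset.mem_filter, Finset.mem_univ, true_and] at hY
    unfold cFix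
    apply cCount_congr
    rw [hY.2, cfgCard_stdCfg _ _ hy']
  rw [Finset.sum_congr rfl this, Finset.sum_const, smul_eq_mul]
  congr 1
  unfold T
  rw [Finset.filter_filter]
  congr 1
  apply Finset.filter_congr
  intro X _
  exact and_comm
def famQ (s N x : ℕ) : Fin (N + 1) → Finset ℕ := fun n =>
  if (n : ℕ) = 0 then {1} else if (n : ℕ) = N then {x} else Finset.range (s ^ (n : ℕ) + 1)
def S (s N x : ℕ) : ℕ :=
  ∑ f ∈ Fintype.piFinset (famQ s N x), ∏ n : Fin N, cFix s n (f n.castSucc) (f n.succ)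
lemma piIter_one (s : ℕ) (X : Fin (s ^ 1) → Bool) : piIter s 1 X = piMap s 0 X := rfl
lemma stdCfg_one (s : ℕ) : stdCfg (s ^ 0) 1 = fun _ => true := by
  funext i
  have hi : (i : ℕ) = 0 := by have h1 := i.isLt; have h2 : s ^ 0 = 1 := pow_zero s; omega
  simp [stdCfg, hi]
lemma T_one (s x : ℕ) : T s 1 x = cFix s 0 1 x := by
  unfold T cFix cCount
  rw [stdCfg_one]
  congr 1
lemma S_one (s x : ℕ) : S s 1 x = cFix s 0 1 x := by
  unfold S
  have hQ : Fintype.piFinset (famQ s 1 x) = {![1, x]} := by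
    rw [Finset.eq_singleton_iff_unique_mem]
    constructor
    · rw [Fintype.mem_piFinset]
      intro n
      fin_cases n <;> simp [famQ]
    · intro f hf
      rw [Fintype.mem_piFinset] at hf
      funext n
      fin_cases n
      · have := hf 0; simp [famQ] at this; simpa using this
      · have := hf 1; simp [famQ] at this; simpa using this
  rw [hQ, Finset.sum_singleton]
  simp
lemma famQ_last (s N x : ℕ) : famQ s (N + 1) x (Fin.last (N + 1)) = {x} := by
  simp [famQ]
lemma famQ_init (s N x : ℕ) (k : Fin (N + 1)) :
    Fin.init (famQ s (N + 1) x) k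
      = if (k : ℕ) = 0 then {1} else Finset.range (s ^ (k : ℕ) + 1) := by
  show famQ s (N + 1) x k.castSucc = _
  unfold famQ
  have h1 : ((k.castSucc : Fin (N + 2)) : ℕ) = (k : ℕ) := rfl
  rw [h1]
  have hk : (k : ℕ) < N + 1 := k.isLt
  by_cases h0 : (k : ℕ) = 0
  · simp [h0]
  · rw [if_neg h0, if_neg h0, if_neg (by omega)]
lemma S_rec (s N x : ℕ) (hN : 1 ≤ N) :
    S s (N + 1) x = ∑ y ∈ Finset.range (s ^ N + 1), S s N y * cFix s N y x := by
  unfold S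
  have hsplit : Fintype.piFinset (famQ s (N + 1) x)
      = ((famQ s (N + 1) x (Fin.last (N + 1))) ×ˢ
          Fintype.piFinset (Fin.init (famQ s (N + 1) x))).map
        (Fin.snocEquiv (fun _ => ℕ)).toEmbedding := by
    have h := Finset.filter_piFinset_eq_map_snocEquiv (famQ s (N + 1) x) (fun _ => True)
    simpa using h
  rw [hsplit, Finset.sum_map, famQ_last, Finset.sum_product, Finset.sum_singleton]
  have happ : ∀ g : Fin (N + 1) → ℕ,
      ((Fin.snocEquiv (fun _ => ℕ)).toEmbedding (x, g)) = Fin.snoc g x := fun g => rfl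
  have hterm : ∀ g : Fin (N + 1) → ℕ,
      (∏ n : Fin (N + 1), cFix s n ((Fin.snoc g x : Fin (N+2) → ℕ) n.castSucc)
        ((Fin.snoc g x : Fin (N+2) → ℕ) n.succ))
      = (∏ m : Fin N, cFix s m (g m.castSucc) (g m.succ)) * cFix s N (g (Fin.last N)) x := by
    intro g
    rw [Fin.prod_univ_castSucc]
    congr 1
    · apply Finset.prod_congr rfl
      intro m _
      rw [Fin.succ_castSucc]
      rw [Fin.snoc_castSucc, Fin.snoc_castSucc]
      rfl
    · rw [Fin.succ_last, Fin.snoc_castSucc, Fin.snoc_last]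
      rfl
  have hmaps : ∀ g ∈ Fintype.piFinset (Fin.init (famQ s (N + 1) x)),
      g (Fin.last N) ∈ Finset.range (s ^ N + 1) := by
    intro g hg
    rw [Fintype.mem_piFinset] at hg
    have := hg (Fin.last N)
    rw [famQ_init] at this
    rw [if_neg (by simp [Fin.val_last]; omega)] at this
    simpa using this
  rw [← Finset.sum_fiberwise_of_maps_to hmaps
      (fun g => ∏ n : Fin (N + 1), cFix s n
        (((Fin.snocEquiv (fun _ => ℕ)).toEmbedding (x, g)) n.castSucc)
        (((Fin.snocEquiv (fun _ => ℕ)).toEmbedding (x, g)) n.succ))]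
  apply Finset.sum_congr rfl
  intro y hy
  have hy' : y ≤ s ^ N := Nat.lt_succ_iff.mp (Finset.mem_range.mp hy)
  have hset : (Fintype.piFinset (Fin.init (famQ s (N + 1) x))).filter
        (fun g => g (Fin.last N) = y)
      = Fintype.piFinset (famQ s N y) := by
    ext g
    simp only [Finset.mem_filter, Fintype.mem_piFinset]
    constructor
    · rintro ⟨hg, hlast⟩ n
      have hn := hg n
      rw [famQ_init] at hn
      unfold famQ
      by_cases h0 : (n : ℕ) = 0
      · rw [if_pos h0] at hn ⊢; exact hn
      · rw [if_neg h0] at hn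
        rw [if_neg h0]
        by_cases hNn : (n : ℕ) = N
        · rw [if_pos hNn]
          have : n = Fin.last N := Fin.ext (by simpa using hNn)
          rw [this] at hn ⊢
          simp [hlast]
        · rw [if_neg hNn]; exact hn
    · intro hg
      have hlast : g (Fin.last N) = y := by
        have := hg (Fin.last N)
        unfold famQ at this
        rw [if_neg (by simp [Fin.val_last]; omega), if_pos (by simp [Fin.val_last])] at this
        simpa using this
      refine ⟨fun n => ?_, hlast⟩
      have hn := hg n
      unfold famQ at hn
      rw [famQ_init]
      by_cases h0 : (n : ℕ) = 0
      · rw [if_pos h0] at hn ⊢; exact hn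
      · rw [if_neg h0] at hn
        rw [if_neg h0]
        by_cases hNn : (n : ℕ) = N
        · rw [if_pos hNn] at hn
          simp only [Finset.mem_singleton] at hn
          rw [hn, hNn]
          simp [Nat.lt_succ_iff, hy']
        · rw [if_neg hNn] at hn; exact hn
  have hsum : ∀ g ∈ (Fintype.piFinset (Fin.init (famQ s (N + 1) x))).filter
      (fun g => g (Fin.last N) = y),
      (∏ n : Fin (N + 1), cFix s n (((Fin.snocEquiv (fun _ => ℕ)).toEmbedding (x, g)) n.castSucc)
        (((Fin.snocEquiv (fun _ => ℕ)).toEmbedding (x, g)) n.succ))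
      = (∏ m : Fin N, cFix s m (g m.castSucc) (g m.succ)) * cFix s N y x := by
    intro g hg
    have hlast : g (Fin.last N) = y := (Finset.mem_filter.mp hg).2
    rw [happ g, hterm g, hlast]
  rw [Finset.sum_congr rfl hsum, ← Finset.sum_mul, hset]

lemma TS (s N : ℕ) (hN : 1 ≤ N) : ∀ x, T s N x = S s N x := by
  induction N, hN using Nat.le_induction with
  | base => intro x; rw [T_one, S_one]
  | succ N hN ih =>
    intro x
    rw [T_rec, S_rec s N x hN]
    apply Finset.sum_congr rfl
    intro y _
    rw [ih y]

/-- Theorem 1 (bottom-up hierarchical system): the number of level-`N`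
configurations with `x` entries `+1` electing a `+1` president equals the
Chapman–Kolmogorov type sum, and consequently the winning probability
`p_x(N,s)` equals `C(s^N, x)⁻¹` times this sum. -/
theorem bottom_up_hierarchical_system (s N x : ℕ) (hs : 3 ≤ s) (hN : 1 ≤ N)
    (hx : x ≤ s ^ N) :
    (Finset.univ.filter fun X : Fin (s ^ N) → Bool =>
        cfgCard X = x ∧ piIter s N X = fun _ => true).card
      = ∑ f ∈ Fintype.piFinset (fun n : Fin (N + 1) =>
          if (n : ℕ) = 0 then {1}
          else if (n : ℕ) = N then {x}
          else Finset.range (s ^ (n : ℕ) + 1)),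
          ∏ n : Fin N, cFix s n (f n.castSucc) (f n.succ)
    ∧ ((Finset.univ.filter fun X : Fin (s ^ N) → Bool =>
        cfgCard X = x ∧ piIter s N X = fun _ => true).card : ℝ)
          / ((s ^ N).choose x : ℝ)
      = (((s ^ N).choose x : ℝ))⁻¹
        * ((∑ f ∈ Fintype.piFinset (fun n : Fin (N + 1) =>
            if (n : ℕ) = 0 then {1}
            else if (n : ℕ) = N then {x}
            else Finset.range (s ^ (n : ℕ) + 1)),
            ∏ n : Fin N, cFix s n (f n.castSucc) (f n.succ) : ℕ) : ℝ) := by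
  have h1 : T s N x = S s N x := TS s N hN x
  refine ⟨h1, ?_⟩
  rw [show (Finset.univ.filter fun X : Fin (s ^ N) → Bool =>
        cfgCard X = x ∧ piIter s N X = fun _ => true).card = S s N x from h1]
  exact div_eq_inv_mul _ _
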